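/- Let a = χ^S be a perfect 2-coloring of E^n with matrix of parameters ((n−b, b),(c, n−c)), where b, c > 0. Then cor(S) = (b+c)/2 − 1. -/

import Mathlib

open Finset

/-- Weight of a vector in the Boolean cube: the number of ones. -/
def wt {n : ℕ} (y : Fin n → Bool) : ℕ := (Finset.univ.filter fun i => y i = true).card

/-- The face `E^n_y(z) = {x : [x,y] = [z,y]}`: all `x` agreeing with `z` on the
support of `y`. -/
def face {n : ℕ} (y z : Fin n → Bool) : Finset (Fin n → Bool) :=
  Finset.univ.filter fun x => ∀ i, y i = true → x i = z i

/-- `χ^S` is correlation-immune of order `k`: all faces obtained by fixing `k`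
coordinates (i.e. faces `E^n_y(z)` with `wt y = k`) intersect `S` in the same
cardinality. -/
def CorrImmune {n : ℕ} (S : Finset (Fin n → Bool)) (k : ℕ) : Prop :=
  ∀ y₁ z₁ y₂ z₂ : Fin n → Bool, wt y₁ = k → wt y₂ = k →
    (face y₁ z₁ ∩ S).card = (face y₂ z₂ ∩ S).card

/-- `cor S` : the maximum order of correlation immunity of `χ^S`. -/
noncomputable def cor {n : ℕ} (S : Finset (Fin n → Bool)) : ℕ :=
  sSup {k | k ≤ n ∧ CorrImmune S k}

/-- Density `ρ(S) = |S| / 2^n`. -/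
def rho {n : ℕ} (S : Finset (Fin n → Bool)) : ℚ := (S.card : ℚ) / 2 ^ n

/-- `nei S`: the average number of neighbors in `S` of vertices of `S`,
`(1/|S|) ∑_{x∈S} |B(x) ∩ S| - 1`, where `B x` is the Hamming ball of radius 1. -/
def nei {n : ℕ} (S : Finset (Fin n → Bool)) : ℚ :=
  (∑ x ∈ S, ((S.filter fun y => hammingDist x y ≤ 1).card : ℚ)) / (S.card : ℚ) - 1

/-- Characteristic function of `S`, as a rational-valued function. -/
def chi {n : ℕ} (S : Finset (Fin n → Bool)) (x : Fin n → Bool) : ℚ := if x ∈ S then 1 else 0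

/-- Characteristic function of `S` as a 2-coloring (color 1 = membership in `S`). -/
def chiCol {n : ℕ} (S : Finset (Fin n → Bool)) (x : Fin n → Bool) : Fin 2 :=
  if x ∈ S then 1 else 0

/-- `Col` is a perfect coloring with parameter matrix `A`: every vertex of color `i`
has exactly `A i j` neighbors (at Hamming distance 1) of color `j`. -/
def IsPerfectColoring {n : ℕ} (Col : (Fin n → Bool) → Fin 2) (A : Fin 2 → Fin 2 → ℕ) : Prop :=
  ∀ x : Fin n → Bool, ∀ j : Fin 2,
    (Finset.univ.filter fun y => hammingDist x y = 1 ∧ Col y = j).card = A (Col x) j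

/-- Fourier transform `â(v) = ∑_u a(u) (-1)^{⟨u,v⟩}`. -/
def fourierT {n : ℕ} (a : (Fin n → Bool) → ℚ) (v : Fin n → Bool) : ℚ :=
  ∑ u : Fin n → Bool, a u * (-1) ^ ((Finset.univ.filter fun i => u i = true ∧ v i = true).card)

/-- Coordinatewise XOR. -/
def xorv {n : ℕ} (u v : Fin n → Bool) : Fin n → Bool := fun i => xor (u i) (v i)

/-- Weight distribution `B_i(a) = (1/|S|) |{(u,v) ∈ S×S : wt(u⊕v) = i}|`. -/
def Bdist {n : ℕ} (S : Finset (Fin n → Bool)) (i : ℕ) : ℚ :=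
  (((S ×ˢ S).filter fun p => wt (xorv p.1 p.2) = i).card : ℚ) / (S.card : ℚ)

/-- Kravchuk polynomial `P_k(i) = ∑_{j=0}^k (-1)^j C(i,j) C(n-i,k-j)`. -/
def krav (n k i : ℕ) : ℚ :=
  ∑ j ∈ Finset.range (k + 1),
    (-1 : ℚ) ^ j * (Nat.choose i j : ℚ) * (Nat.choose (n - i) (k - j) : ℚ)

/-- MacWilliams transform `B'_k(a) = (1/|S|) ∑_{i=0}^n B_i(a) P_k(i)`. -/
def Bmw {n : ℕ} (S : Finset (Fin n → Bool)) (k : ℕ) : ℚ :=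
  (∑ i ∈ Finset.range (n + 1), Bdist S i * krav n k i) / (S.card : ℚ)

/-- sign (-1)^{<x,v>} as a product -/
def sgn {n : ℕ} (x v : Fin n → Bool) : ℚ :=
  ∏ i, (if x i = true ∧ v i = true then (-1:ℚ) else 1)

/-- Fourier coefficient of the indicator of S -/
def Wf {n : ℕ} (S : Finset (Fin n → Bool)) (v : Fin n → Bool) : ℚ := ∑ x ∈ S, sgn x v

lemma sum_pi_bool {n : ℕ} (g : Fin n → Bool → ℚ) :
    ∑ x : Fin n → Bool, ∏ i, g i (x i) = ∏ i, (g i false + g i true) := by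
  rw [show (∏ i, (g i false + g i true)) = ∏ i, ∑ b ∈ (univ : Finset Bool), g i b by
    apply Finset.prod_congr rfl; intro i _; rw [Fintype.sum_bool]; ring]
  rw [Finset.prod_univ_sum, Fintype.piFinset_univ]

lemma sgn_mul {n : ℕ} (x z v : Fin n → Bool) :
    sgn x v * sgn z v = sgn (fun i => xor (x i) (z i)) v := by
  unfold sgn
  rw [← Finset.prod_mul_distrib]
  apply Finset.prod_congr rfl
  intro i _
  cases hx : x i <;> cases hz : z i <;> cases hv : v i <;> simp [hx, hz]

lemma sgn_zero {n : ℕ} (x : Fin n → Bool) : sgn x (fun _ => false) = 1 := by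
  unfold sgn; apply Finset.prod_eq_one; intro i _; simp

lemma sum_sgn_eq_zero {n : ℕ} {v : Fin n → Bool} (hv : ∃ i, v i = true) :
    ∑ x : Fin n → Bool, sgn x v = 0 := by
  have h := sum_pi_bool (fun i (b : Bool) => if b = true ∧ v i = true then (-1:ℚ) else 1)
  rw [show (∑ x : Fin n → Bool, sgn x v)
      = ∑ x : Fin n → Bool, ∏ i, (fun i (b : Bool) => if b = true ∧ v i = true then (-1:ℚ) else 1) i (x i) from rfl, h]
  obtain ⟨i, hi⟩ := hv
  apply Finset.prod_eq_zero (Finset.mem_univ i)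
  simp [hi]

lemma wt_pos_iff {n : ℕ} (v : Fin n → Bool) : 1 ≤ wt v ↔ ∃ i, v i = true := by
  rw [show (1 ≤ wt v) ↔ (0 < wt v) from Iff.rfl, wt, Finset.card_pos, Finset.filter_nonempty_iff]
  simp
lemma inner_sum_face {n : ℕ} (y w : Fin n → Bool) :
    ∑ v : Fin n → Bool,
      (if ∀ i, v i = true → y i = true then (1:ℚ) else 0) * sgn w v
    = if ∀ i, y i = true → w i = false then (2:ℚ)^(wt y) else 0 := by
  have step : ∀ v : Fin n → Bool,
      (if ∀ i, v i = true → y i = true then (1:ℚ) else 0) * sgn w v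
      = ∏ i, (fun i (b : Bool) => (if (b = true → y i = true) then (1:ℚ) else 0)
          * (if w i = true ∧ b = true then (-1:ℚ) else 1)) i (v i) := by
    intro v
    rw [show (if ∀ i, v i = true → y i = true then (1:ℚ) else 0)
        = ∏ i, (if (v i = true → y i = true) then (1:ℚ) else 0) by
      rw [Finset.prod_boole]; simp]
    rw [sgn, ← Finset.prod_mul_distrib]
  rw [Finset.sum_congr rfl (fun v _ => step v),
    sum_pi_bool (fun i (b : Bool) => (if (b = true → y i = true) then (1:ℚ) else 0)
          * (if w i = true ∧ b = true then (-1:ℚ) else 1))]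
  by_cases h : ∀ i, y i = true → w i = false
  · rw [if_pos h]
    have heq : ∀ i ∈ (univ : Finset (Fin n)),
        ((if ((false:Bool) = true → y i = true) then (1:ℚ) else 0)
          * (if w i = true ∧ (false:Bool) = true then (-1:ℚ) else 1))
        + ((if ((true:Bool) = true → y i = true) then (1:ℚ) else 0)
          * (if w i = true ∧ (true:Bool) = true then (-1:ℚ) else 1))
        = if y i = true then (2:ℚ) else 1 := by
      intro i _
      by_cases hy : y i = true
      · have hw : w i = false := h i hy
        simp [hy, hw]
        norm_num
      · simp [hy]
    rw [Finset.prod_congr rfl heq, Finset.prod_ite, Finset.prod_const, Finset.prod_const,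
      one_pow, mul_one]
    rfl
  · rw [if_neg h]
    push_neg at h
    obtain ⟨i, hy, hw⟩ := h
    apply Finset.prod_eq_zero (Finset.mem_univ i)
    have hw' : w i = true := by simpa using hw
    simp [hy, hw']

lemma face_expand {n : ℕ} (S : Finset (Fin n → Bool)) (y z : Fin n → Bool) :
    ∑ v : Fin n → Bool,
      (if ∀ i, v i = true → y i = true then (1:ℚ) else 0) * (sgn z v * Wf S v)
    = (2:ℚ)^(wt y) * ((face y z ∩ S).card : ℚ) := by
  have l1 : ∀ v : Fin n → Bool,
      (if ∀ i, v i = true → y i = true then (1:ℚ) else 0) * (sgn z v * Wf S v)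
      = ∑ x ∈ S, (if ∀ i, v i = true → y i = true then (1:ℚ) else 0)
          * sgn (fun i => xor (z i) (x i)) v := by
    intro v
    rw [Wf, Finset.mul_sum, Finset.mul_sum]
    exact Finset.sum_congr rfl fun x _ => by rw [sgn_mul]
  rw [Finset.sum_congr rfl (fun v _ => l1 v), Finset.sum_comm]
  have l2 : ∀ x ∈ S, (∑ v : Fin n → Bool,
      (if ∀ i, v i = true → y i = true then (1:ℚ) else 0)
        * sgn (fun i => xor (z i) (x i)) v)
      = if x ∈ face y z then (2:ℚ)^(wt y) else 0 := by
    intro x _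
    rw [inner_sum_face]
    have hiff : (∀ i, y i = true → xor (z i) (x i) = false) ↔ (∀ i, y i = true → x i = z i) := by
      constructor <;> intro h i hi <;> have := h i hi <;>
        cases hz : z i <;> cases hx : x i <;> simp_all
    refine if_congr ?_ rfl rfl
    rw [hiff]
    simp [face]
  rw [Finset.sum_congr rfl l2, Finset.sum_ite, Finset.sum_const, Finset.sum_const_zero,
    add_zero, nsmul_eq_mul, mul_comm]
  have hset : S.filter (fun x => x ∈ face y z) = face y z ∩ S := by
    ext x
    simp [face, and_comm]
  rw [hset]
lemma wt_le_of_le {n : ℕ} {v y : Fin n → Bool} (h : ∀ i, v i = true → y i = true) :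
    wt v ≤ wt y := by
  apply Finset.card_le_card
  intro i hi
  rw [Finset.mem_filter] at *
  exact ⟨hi.1, h i hi.2⟩

lemma Wf_zero {n : ℕ} (S : Finset (Fin n → Bool)) : Wf S (fun _ => false) = S.card := by
  unfold Wf
  rw [Finset.sum_congr rfl (fun x _ => sgn_zero x), Finset.sum_const, nsmul_eq_mul, mul_one]

lemma face_card_eq {n : ℕ} (S : Finset (Fin n → Bool)) {m : ℕ}
    (h : ∀ v : Fin n → Bool, 1 ≤ wt v → wt v ≤ m → Wf S v = 0)
    {y : Fin n → Bool} (z : Fin n → Bool) (hy : wt y = m) :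
    (2:ℚ)^m * ((face y z ∩ S).card : ℚ) = S.card := by
  rw [← hy, ← face_expand]
  rw [Finset.sum_eq_single (fun _ => false)]
  · rw [sgn_zero, Wf_zero, if_pos (fun i hi => absurd hi (by simp))]
    ring
  · intro v _ hv
    by_cases hc : ∀ i, v i = true → y i = true
    · rw [if_pos hc]
      have h1 : 1 ≤ wt v := by
        rw [wt_pos_iff]
        by_contra hno
        push_neg at hno
        exact hv (funext fun i => by
          cases hvi : v i
          · rfl
          · exact absurd hvi (hno i))
      have h2 : wt v ≤ m := hy ▸ wt_le_of_le hc
      rw [h v h1 h2]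
      ring
    · rw [if_neg hc, zero_mul]
  · intro habs
    exact absurd (Finset.mem_univ _) habs

lemma ci_of_W {n : ℕ} (S : Finset (Fin n → Bool)) (m : ℕ)
    (h : ∀ v : Fin n → Bool, 1 ≤ wt v → wt v ≤ m → Wf S v = 0) :
    CorrImmune S m := by
  intro y₁ z₁ y₂ z₂ h₁ h₂
  have e1 := face_card_eq S h z₁ h₁
  have e2 := face_card_eq S h z₂ h₂
  have h2 : (2:ℚ)^m ≠ 0 := by positivity
  have : ((face y₁ z₁ ∩ S).card : ℚ) = ((face y₂ z₂ ∩ S).card : ℚ) :=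
    mul_left_cancel₀ h2 (e1.trans e2.symm)
  exact_mod_cast this

lemma face_card_sum {n : ℕ} (S : Finset (Fin n → Bool)) (y z : Fin n → Bool) :
    ((face y z ∩ S).card : ℚ) = ∑ x ∈ S, (if ∀ i, y i = true → x i = z i then (1:ℚ) else 0) := by
  rw [Finset.sum_boole]
  congr 2
  ext x
  simp [face, and_comm]

lemma sum_sgn_face {n : ℕ} (y v x : Fin n → Bool) (hvy : ∀ i, v i = true → y i = true) :
    ∑ z : Fin n → Bool, (if ∀ i, y i = true → x i = z i then (1:ℚ) else 0) * sgn z v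
    = (2:ℚ)^(n - wt y) * sgn x v := by
  have step : ∀ z : Fin n → Bool,
      (if ∀ i, y i = true → x i = z i then (1:ℚ) else 0) * sgn z v
      = ∏ i, (fun i (b : Bool) => (if (y i = true → x i = b) then (1:ℚ) else 0)
          * (if b = true ∧ v i = true then (-1:ℚ) else 1)) i (z i) := by
    intro z
    rw [show (if ∀ i, y i = true → x i = z i then (1:ℚ) else 0)
        = ∏ i, (if (y i = true → x i = z i) then (1:ℚ) else 0) by
      rw [Finset.prod_boole]; simp]
    rw [sgn, ← Finset.prod_mul_distrib]
  rw [Finset.sum_congr rfl (fun z _ => step z),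
    sum_pi_bool (fun i (b : Bool) => (if (y i = true → x i = b) then (1:ℚ) else 0)
          * (if b = true ∧ v i = true then (-1:ℚ) else 1))]
  have heq : ∀ i ∈ (univ : Finset (Fin n)),
      ((if (y i = true → x i = false) then (1:ℚ) else 0)
        * (if (false:Bool) = true ∧ v i = true then (-1:ℚ) else 1))
      + ((if (y i = true → x i = true) then (1:ℚ) else 0)
        * (if (true:Bool) = true ∧ v i = true then (-1:ℚ) else 1))
      = (if y i = true then (1:ℚ) else 2) * (if x i = true ∧ v i = true then (-1:ℚ) else 1) := by
    intro i _
    have hvyi := hvy i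
    cases hy : y i <;> cases hv : v i <;> cases hx : x i <;> simp_all <;> norm_num
  rw [Finset.prod_congr rfl heq, Finset.prod_mul_distrib]
  congr 1
  · rw [Finset.prod_ite, Finset.prod_const, Finset.prod_const, one_pow, one_mul]
    congr 1
    have hcc := Finset.card_filter_add_card_filter_not
      (s := (univ : Finset (Fin n))) (p := fun i => y i = true)
    rw [Finset.card_univ, Fintype.card_fin] at hcc
    have : wt y ≤ n := by
      unfold wt
      calc (Finset.univ.filter fun i => y i = true).card ≤ (univ : Finset (Fin n)).card :=
        Finset.card_filter_le _ _
      _ = n := by rw [Finset.card_univ, Fintype.card_fin]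
    unfold wt at *
    omega

lemma W_eq_zero_of_ci {n : ℕ} (S : Finset (Fin n → Bool)) {m : ℕ} (hmn : m ≤ n)
    (hci : CorrImmune S m) {v : Fin n → Bool} (h1 : 1 ≤ wt v) (h2 : wt v ≤ m) :
    Wf S v = 0 := by
  obtain ⟨t, hsub, hcard⟩ := Finset.exists_superset_card_eq
    (s := Finset.univ.filter fun i => v i = true) (n := m) h2
    (by rw [Fintype.card_fin]; exact hmn)
  set y : Fin n → Bool := fun i => decide (i ∈ t) with hy
  have hyw : wt y = m := by
    unfold wt
    have hft : (Finset.univ.filter fun i => y i = true) = t := by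
      ext i
      simp [hy]
    rw [hft]
    exact hcard
  have hvy : ∀ i, v i = true → y i = true := by
    intro i hi
    simp only [hy, decide_eq_true_eq]
    exact hsub (by simp [hi])
  have hC : ∀ z : Fin n → Bool,
      ((face y z ∩ S).card : ℚ) = ((face y (fun _ => false) ∩ S).card : ℚ) := by
    intro z
    exact_mod_cast congrArg Nat.cast (hci y z y (fun _ => false) hyw hyw)
  have key : ∑ z : Fin n → Bool, sgn z v * ((face y z ∩ S).card : ℚ)
      = (2:ℚ)^(n-m) * Wf S v := by
    have l1 : ∀ z ∈ (univ : Finset (Fin n → Bool)), sgn z v * ((face y z ∩ S).card : ℚ)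
        = ∑ x ∈ S, (if ∀ i, y i = true → x i = z i then (1:ℚ) else 0) * sgn z v := by
      intro z _
      rw [face_card_sum, Finset.mul_sum]
      exact Finset.sum_congr rfl fun x _ => by ring
    rw [Finset.sum_congr rfl l1, Finset.sum_comm]
    rw [Finset.sum_congr rfl (fun x _ => sum_sgn_face y v x hvy)]
    rw [← Finset.mul_sum, hyw]
    rfl
  have hzero : ∑ z : Fin n → Bool, sgn z v * ((face y z ∩ S).card : ℚ) = 0 := by
    rw [Finset.sum_congr rfl (fun z _ => by rw [hC z])]
    rw [← Finset.sum_mul, sum_sgn_eq_zero ((wt_pos_iff v).1 h1), zero_mul]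
  have h2n : (2:ℚ)^(n-m) ≠ 0 := by positivity
  have := hzero.symm.trans key
  exact (mul_eq_zero.mp this.symm).resolve_left h2n
def flip1 {n : ℕ} (y : Fin n → Bool) (i : Fin n) : Fin n → Bool :=
  Function.update y i (!(y i))

lemma flip1_inj {n : ℕ} (w : Fin n → Bool) : Function.Injective (flip1 w) := by
  intro i j h
  by_contra hne
  have hc := congrFun h i
  rw [flip1, flip1, Function.update_self, Function.update_of_ne hne] at hc
  simp at hc

lemma hamming_flip1 {n : ℕ} (y : Fin n → Bool) (i : Fin n) :
    hammingDist y (flip1 y i) = 1 := by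
  show (Finset.univ.filter fun j => y j ≠ flip1 y i j).card = 1
  rw [Finset.card_eq_one]
  refine ⟨i, ?_⟩
  ext j
  simp only [Finset.mem_filter, Finset.mem_univ, true_and, Finset.mem_singleton, flip1]
  by_cases h : j = i
  · subst h
    erw [Finset.mem_filter]; simp
  · erw [Finset.mem_filter]; simp [Function.update_of_ne h, h]

lemma dist_one_eq_image {n : ℕ} (x : Fin n → Bool) :
    (univ.filter fun w => hammingDist x w = 1) = Finset.image (flip1 x) univ := by
  ext w
  simp only [Finset.mem_filter, Finset.mem_univ, true_and, Finset.mem_image]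
  constructor
  · intro h
    obtain ⟨i, hi⟩ := Finset.card_eq_one.mp h
    refine ⟨i, ?_⟩
    funext j
    by_cases hj : j = i
    · subst hj
      have hmem : j ∈ Finset.univ.filter (fun k => x k ≠ w k) := by
        rw [hi]; exact Finset.mem_singleton_self j
      have hne : x j ≠ w j := by simpa using hmem
      rw [flip1, Function.update_self]
      cases hw : w j <;> cases hx : x j <;> simp_all
    · have hxe : x j = w j := by
        by_contra hne
        have hmem : j ∈ Finset.univ.filter (fun k => x k ≠ w k) := by simp [hne]
        rw [hi] at hmem
        exact hj (Finset.mem_singleton.mp hmem)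
      rw [flip1, Function.update_of_ne hj, hxe]
  · rintro ⟨i, rfl⟩
    exact hamming_flip1 x i

lemma sgn_flip1 {n : ℕ} (y v : Fin n → Bool) (i : Fin n) :
    sgn (flip1 y i) v = (if v i = true then (-1:ℚ) else 1) * sgn y v := by
  unfold sgn
  rw [← Finset.mul_prod_erase univ
    (fun j => if flip1 y i j = true ∧ v j = true then (-1:ℚ) else 1) (Finset.mem_univ i)]
  conv_rhs => rw [← Finset.mul_prod_erase univ
    (fun j => if y j = true ∧ v j = true then (-1:ℚ) else 1) (Finset.mem_univ i)]
  have hrest : (∏ j ∈ univ.erase i, (if flip1 y i j = true ∧ v j = true then (-1:ℚ) else 1))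
      = ∏ j ∈ univ.erase i, (if y j = true ∧ v j = true then (-1:ℚ) else 1) := by
    apply Finset.prod_congr rfl
    intro j hj
    rw [flip1, Function.update_of_ne (Finset.mem_erase.mp hj).1]
  rw [hrest, flip1, Function.update_self, ← mul_assoc]
  congr 1
  cases hy : y i <;> cases hv : v i <;> simp [hy, hv]

lemma card_filter_not_true {n : ℕ} (v : Fin n → Bool) :
    ((univ.filter fun i => ¬ v i = true).card : ℚ) = (n:ℚ) - (wt v : ℚ) := by
  have hcc := Finset.card_filter_add_card_filter_not
    (s := (univ : Finset (Fin n))) (p := fun i => v i = true)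
  rw [Finset.card_univ, Fintype.card_fin] at hcc
  have hle : wt v ≤ n := by
    unfold wt
    calc (Finset.univ.filter fun i => v i = true).card ≤ (univ : Finset (Fin n)).card :=
      Finset.card_filter_le _ _
    _ = n := by rw [Finset.card_univ, Fintype.card_fin]
  unfold wt at *
  have : (univ.filter fun i => ¬ v i = true).card = n - (univ.filter fun i => v i = true).card := by
    omega
  rw [this]
  push_cast [Nat.cast_sub hle]
  ring

lemma sum_sgn_dist_one {n : ℕ} (w v : Fin n → Bool) :
    ∑ x ∈ univ.filter (fun x => hammingDist w x = 1), sgn x v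
    = ((n:ℚ) - 2 * (wt v : ℚ)) * sgn w v := by
  rw [dist_one_eq_image w, Finset.sum_image (fun i _ j _ h => flip1_inj w h)]
  rw [Finset.sum_congr rfl (fun i _ => sgn_flip1 w v i), ← Finset.sum_mul]
  congr 1
  rw [Finset.sum_ite, Finset.sum_const, Finset.sum_const, nsmul_eq_mul, nsmul_eq_mul,
    mul_one, mul_neg_one, card_filter_not_true]
  unfold wt
  ring
lemma chiCol_eq_one {n : ℕ} (S : Finset (Fin n → Bool)) (w : Fin n → Bool) :
    chiCol S w = 1 ↔ w ∈ S := by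
  unfold chiCol
  by_cases h : w ∈ S <;> simp [h]

lemma eigen {n : ℕ} (S : Finset (Fin n → Bool)) (b c : ℕ) (A : Fin 2 → Fin 2 → ℕ)
    (hA : IsPerfectColoring (chiCol S) A)
    (h01 : A 0 1 = b) (h11 : A 1 1 + c = n)
    (v : Fin n → Bool) (hv : ∃ i, v i = true) :
    ((2:ℚ) * (wt v : ℚ) - (b:ℚ) - (c:ℚ)) * Wf S v = 0 := by
  have hcards : ∀ x : Fin n → Bool,
      ((univ.filter fun w => hammingDist x w = 1 ∧ chiCol S w = 1).card : ℚ)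
      = ∑ w : Fin n → Bool, (if hammingDist x w = 1 ∧ w ∈ S then (1:ℚ) else 0) := by
    intro x
    have hfe : (univ.filter fun w => hammingDist x w = 1 ∧ chiCol S w = 1)
        = (univ.filter fun w => hammingDist x w = 1 ∧ w ∈ S) := by
      apply Finset.filter_congr
      intro w _
      rw [chiCol_eq_one S w]
    rw [hfe, Finset.sum_boole]
  -- way A
  have e1 : ∑ x : Fin n → Bool,
      ((univ.filter fun w => hammingDist x w = 1 ∧ chiCol S w = 1).card : ℚ) * sgn x v
      = ((n:ℚ) - (b:ℚ) - (c:ℚ)) * Wf S v := by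
    have hval : ∀ x : Fin n → Bool, (A (chiCol S x) 1 : ℚ)
        = (b:ℚ) + (if x ∈ S then ((n:ℚ) - (b:ℚ) - (c:ℚ)) else 0) := by
      intro x
      by_cases hx : x ∈ S
      · rw [chiCol, if_pos hx, if_pos hx]
        have h11' : (A 1 1 : ℚ) + (c:ℚ) = (n:ℚ) := by exact_mod_cast congrArg Nat.cast h11
        linarith
      · rw [chiCol, if_neg hx, if_neg hx, add_zero]
        exact_mod_cast congrArg Nat.cast h01
    have hstep : ∀ x ∈ (univ : Finset (Fin n → Bool)),
        ((univ.filter fun w => hammingDist x w = 1 ∧ chiCol S w = 1).card : ℚ) * sgn x v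
        = (b:ℚ) * sgn x v + (if x ∈ S then ((n:ℚ) - (b:ℚ) - (c:ℚ)) * sgn x v else 0) := by
      intro x _
      rw [show ((univ.filter fun w => hammingDist x w = 1 ∧ chiCol S w = 1).card : ℚ)
          = (A (chiCol S x) 1 : ℚ) from congrArg Nat.cast (hA x 1)]
      rw [hval x, add_mul, ite_mul, zero_mul]
    rw [Finset.sum_congr rfl hstep, Finset.sum_add_distrib, ← Finset.mul_sum,
      sum_sgn_eq_zero hv, mul_zero, zero_add, Finset.sum_ite_mem, Finset.univ_inter,
      ← Finset.mul_sum]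
    rfl
  -- way B
  have e2 : ∑ x : Fin n → Bool,
      ((univ.filter fun w => hammingDist x w = 1 ∧ chiCol S w = 1).card : ℚ) * sgn x v
      = ((n:ℚ) - 2 * (wt v : ℚ)) * Wf S v := by
    rw [Finset.sum_congr rfl (fun x _ => by rw [hcards x, Finset.sum_mul])]
    rw [Finset.sum_comm]
    have inner : ∀ w ∈ (univ : Finset (Fin n → Bool)),
        (∑ x : Fin n → Bool, (if hammingDist x w = 1 ∧ w ∈ S then (1:ℚ) else 0) * sgn x v)
        = if w ∈ S then ((n:ℚ) - 2 * (wt v : ℚ)) * sgn w v else 0 := by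
      intro w _
      by_cases hw : w ∈ S
      · rw [if_pos hw, ← sum_sgn_dist_one w v]
        rw [Finset.sum_filter]
        apply Finset.sum_congr rfl
        intro x _
        rw [hammingDist_comm w x]
        by_cases hd : hammingDist x w = 1 <;> simp [hd, hw]
      · simp [hw]
    rw [Finset.sum_congr rfl inner, Finset.sum_ite, Finset.sum_const_zero, add_zero,
      Finset.filter_univ_mem, ← Finset.mul_sum]
    rfl
  have := e1.symm.trans e2
  have hWf : ((n:ℚ) - (b:ℚ) - (c:ℚ)) * Wf S v = ((n:ℚ) - 2 * (wt v : ℚ)) * Wf S v := this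
  linear_combination hWf
lemma wt_le_n {n : ℕ} (v : Fin n → Bool) : wt v ≤ n := by
  unfold wt
  calc (Finset.univ.filter fun i => v i = true).card ≤ (univ : Finset (Fin n)).card :=
    Finset.card_filter_le _ _
  _ = n := by rw [Finset.card_univ, Fintype.card_fin]

lemma face_top {n : ℕ} (z : Fin n → Bool) : face (fun _ => true) z = {z} := by
  ext x
  simp only [face, Finset.mem_filter, Finset.mem_univ, true_and, Finset.mem_singleton]
  constructor
  · intro h
    funext i
    exact h i trivial
  · intro h i _
    rw [h]

lemma exists_Wf_ne_zero {n : ℕ} (S : Finset (Fin n → Bool)) (b c : ℕ) (A : Fin 2 → Fin 2 → ℕ)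
    (hA : IsPerfectColoring (chiCol S) A) (h01 : A 0 1 = b) (h10 : A 1 0 = c)
    (hb : 0 < b) (hc : 0 < c) :
    ∃ v : Fin n → Bool, 1 ≤ wt v ∧ Wf S v ≠ 0 := by
  by_contra hno
  push_neg at hno
  have hci : CorrImmune S n := ci_of_W S n (fun v h1 _ => hno v h1)
  have hwtop : wt (fun _ : Fin n => true) = n := by
    unfold wt
    rw [Finset.filter_true_of_mem (fun i _ => rfl), Finset.card_univ, Fintype.card_fin]
  set z₀ : Fin n → Bool := fun _ => false with hz₀
  have hcst : ∀ z : Fin n → Bool, ({z} ∩ S).card = ({z₀} ∩ S).card := by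
    intro z
    have := hci (fun _ => true) z (fun _ => true) z₀ hwtop hwtop
    rwa [face_top, face_top] at this
  have hcard : ∀ z : Fin n → Bool, ({z} ∩ S).card = if z ∈ S then 1 else 0 := by
    intro z
    by_cases hz : z ∈ S
    · rw [Finset.singleton_inter_of_mem hz, if_pos hz, Finset.card_singleton]
    · rw [Finset.singleton_inter_of_notMem hz, if_neg hz, Finset.card_empty]
  by_cases h0 : z₀ ∈ S
  · -- everything is in S, contradict c > 0
    have hall : ∀ z : Fin n → Bool, z ∈ S := by
      intro z
      have := (hcst z).trans (hcard z₀)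
      rw [hcard z, if_pos h0] at this
      by_contra hz
      rw [if_neg hz] at this
      exact absurd this (by norm_num)
    have := hA z₀ 0
    rw [show chiCol S z₀ = 1 from (chiCol_eq_one S z₀).mpr h0] at this
    rw [h10] at this
    have hempty : (univ.filter fun y => hammingDist z₀ y = 1 ∧ chiCol S y = 0) = ∅ := by
      rw [Finset.filter_eq_empty_iff]
      rintro y - ⟨-, hy0⟩
      have : chiCol S y = 1 := (chiCol_eq_one S y).mpr (hall y)
      rw [this] at hy0
      exact absurd hy0 (by decide)
    rw [hempty, Finset.card_empty] at this
    omega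
  · -- nothing is in S, contradict b > 0
    have hall : ∀ z : Fin n → Bool, z ∉ S := by
      intro z hz
      have := (hcst z).trans (hcard z₀)
      rw [hcard z, if_pos hz, if_neg h0] at this
      exact absurd this (by norm_num)
    have := hA z₀ 1
    rw [show chiCol S z₀ = 0 by unfold chiCol; rw [if_neg h0]] at this
    rw [h01] at this
    have hempty : (univ.filter fun y => hammingDist z₀ y = 1 ∧ chiCol S y = 1) = ∅ := by
      rw [Finset.filter_eq_empty_iff]
      rintro y - ⟨-, hy1⟩
      exact hall y ((chiCol_eq_one S y).mp hy1)
    rw [hempty, Finset.card_empty] at this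
    omega


/-- If `χ^S` is a perfect coloring with matrix `((n-b, b), (c, n-c))`,
`b, c > 0`, then `cor S = (b+c)/2 - 1`, i.e. `2(cor S + 1) = b + c`. -/
theorem stmt6 {n : ℕ} (S : Finset (Fin n → Bool)) (b c : ℕ) (A : Fin 2 → Fin 2 → ℕ)
    (hA : IsPerfectColoring (chiCol S) A)
    (h00 : A 0 0 + b = n) (h01 : A 0 1 = b) (h10 : A 1 0 = c) (h11 : A 1 1 + c = n)
    (hb : 0 < b) (hc : 0 < c) :
    2 * (cor S + 1) = b + c := by
  obtain ⟨v₀, hv1, hWne⟩ := exists_Wf_ne_zero S b c A hA h01 h10 hb hc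
  set k := wt v₀ with hk
  have hkn : k ≤ n := wt_le_n v₀
  have heig := eigen S b c A hA h01 h11 v₀ ((wt_pos_iff v₀).1 hv1)
  have hbc : (2 * (k:ℚ)) = (b:ℚ) + (c:ℚ) := by
    by_contra hne
    apply hWne
    have hfac : ((2:ℚ) * (k:ℚ) - (b:ℚ) - (c:ℚ)) ≠ 0 := by
      intro h0
      apply hne
      linarith
    exact (mul_eq_zero.mp heig).resolve_left hfac
  have hbcn : b + c = 2 * k := by exact_mod_cast hbc.symm
  have hk1 : 1 ≤ k := hv1
  have hci : CorrImmune S (k-1) := by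
    apply ci_of_W
    intro v h1 h2
    have heig' := eigen S b c A hA h01 h11 v ((wt_pos_iff v).1 h1)
    have hfac : ((2:ℚ) * (wt v : ℚ) - (b:ℚ) - (c:ℚ)) ≠ 0 := by
      have hne : 2 * wt v ≠ b + c := by omega
      intro h0
      apply hne
      have : (2 * wt v : ℚ) = ((b + c : ℕ) : ℚ) := by push_cast; linarith
      exact_mod_cast this
    exact (mul_eq_zero.mp heig').resolve_left hfac
  have hmem : (k-1) ∈ {m | m ≤ n ∧ CorrImmune S m} := ⟨by omega, hci⟩
  have hub : ∀ m ∈ {m | m ≤ n ∧ CorrImmune S m}, m ≤ k-1 := by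
    rintro m ⟨hmn, hcim⟩
    by_contra hgt
    push_neg at hgt
    exact hWne (W_eq_zero_of_ci S hmn hcim hv1 (by omega))
  have hcor : cor S = k - 1 := by
    unfold cor
    exact le_antisymm (csSup_le ⟨_, hmem⟩ hub) (le_csSup ⟨k-1, hub⟩ hmem)
  rw [hcor]
  omega
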